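/- Under assumptions (A1) and (A2), the unconstrained maximizer of profit, p̂ = S^{-1}(a + Dᵀc), satisfies p̂ ≥ c componentwise. -/

import Mathlib

open Matrix

lemma Zmatrix_inv_nonneg {n : ℕ} (S : Matrix (Fin n) (Fin n) ℝ)
    (hPD : S.PosDef) (hoff : ∀ i j : Fin n, i ≠ j → S i j ≤ 0)
    (x : Fin n → ℝ) (hb : ∀ i, 0 ≤ S.mulVec x i) : ∀ i, 0 ≤ x i := by
  set y : Fin n → ℝ := fun i => max (-(x i)) 0 with hy
  set z : Fin n → ℝ := fun i => max (x i) 0 with hz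
  have hxy : x = z - y := by
    funext i
    simp only [hy, hz, Pi.sub_apply]
    rcases le_total (x i) 0 with h | h
    · rw [max_eq_right h, max_eq_left (by linarith)]; ring
    · rw [max_eq_left h, max_eq_right (by linarith)]; ring
  have hy0 : ∀ i, 0 ≤ y i := fun i => le_max_right _ _
  have hz0 : ∀ i, 0 ≤ z i := fun i => le_max_right _ _
  have h1 : 0 ≤ y ⬝ᵥ S.mulVec x := by
    apply Finset.sum_nonneg
    intro i _
    exact mul_nonneg (hy0 i) (hb i)
  have h2 : y ⬝ᵥ S.mulVec z ≤ 0 := by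
    apply Finset.sum_nonpos
    intro i _
    rw [mulVec, dotProduct]
    rw [Finset.mul_sum]
    apply Finset.sum_nonpos
    intro j _
    rcases eq_or_lt_of_le (hy0 i) with h | h
    · rw [← h]; simp
    rcases eq_or_lt_of_le (hz0 j) with h' | h'
    · rw [← h']; simp
    have hij : i ≠ j := by
      rintro rfl
      have : x i < 0 := by
        have := h; simp only [hy, lt_max_iff] at this
        rcases this with h'' | h''; linarith; linarith
      have : 0 < x i := by
        have := h'; simp only [hz, lt_max_iff] at this
        rcases this with h'' | h''; linarith; linarith
      linarith
    have hS0 := hoff i j hij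
    nlinarith [mul_nonneg h.le h'.le]
  have h3 : y ⬝ᵥ S.mulVec y ≤ 0 := by
    have : S.mulVec x = S.mulVec z - S.mulVec y := by
      rw [hxy, mulVec_sub]
    have hd : y ⬝ᵥ S.mulVec x = y ⬝ᵥ S.mulVec z - y ⬝ᵥ S.mulVec y := by
      rw [this, dotProduct_sub]
    linarith
  have hy_eq : y = 0 := by
    by_contra h
    have := hPD.dotProduct_mulVec_pos h
    simp only [star_trivial] at this
    linarith
  intro i
  have := congrFun hy_eq i
  simp only [hy, Pi.zero_apply] at this
  by_contra h
  push_neg at h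
  rw [max_eq_left (by linarith)] at this
  linarith

theorem unconstrained_maximizer_profitable {n : ℕ}
    (D : Matrix (Fin n) (Fin n) ℝ) (a c : Fin n → ℝ)
    (S : Matrix (Fin n) (Fin n) ℝ) (hS : S = D + Dᵀ)
    (hPD : S.PosDef) (hoff : ∀ i j : Fin n, i ≠ j → S i j ≤ 0)
    (ha : ∀ i, 0 < a i) (hc : ∀ i, 0 < c i)
    (hdc : ∀ i, 0 ≤ (a - D.mulVec c) i)
    (phat : Fin n → ℝ) (hphat : phat = S⁻¹.mulVec (a + Dᵀ.mulVec c)) :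
    ∀ i, c i ≤ phat i := by
  have hdet : IsUnit S.det := isUnit_iff_ne_zero.mpr (ne_of_gt hPD.det_pos)
  have hSp : S.mulVec phat = a + Dᵀ.mulVec c := by
    rw [hphat, mulVec_mulVec, mul_nonsing_inv S hdet, one_mulVec]
  have key : ∀ i, 0 ≤ S.mulVec (phat - c) i := by
    have : S.mulVec (phat - c) = a - D.mulVec c := by
      rw [mulVec_sub, hSp, hS, add_mulVec]
      funext i
      simp [Pi.add_apply, Pi.sub_apply]
    rw [this]
    exact hdc
  have := Zmatrix_inv_nonneg S hPD hoff (phat - c) key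
  intro i
  have := this i
  simp only [Pi.sub_apply] at this
  linarith
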